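/- Let n ≥ 1 and let φ : ℝ → ℝ satisfy F(φ(t)) e^{φ(t)} = e^{nt}/n + F(0), with φ(t) > 0, where F(s) = ∑_{r=0}^{n-1} (-1)^{n-r-1} ((n-1)!/r!) s^r. Then as t → −∞, φ(t) = e^t − (1/(n+1)) e^{2t} + O(e^{3t}). -/

import Mathlib

set_option maxHeartbeats 1000000

open Real Finset Filter Asymptotics


lemma aux_deriv : ∀ (n : ℕ), 1 ≤ n → ∀ s : ℝ,
    HasDerivAt (fun s : ℝ => (∑ r ∈ Finset.range n,
      (-1 : ℝ) ^ (n - r - 1) * ((Nat.factorial (n - 1) : ℝ) / (Nat.factorial r : ℝ)) * s ^ r) * Real.exp s)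
      (s ^ (n - 1) * Real.exp s) s := by
  intro n hn
  induction n, hn using Nat.le_induction with
  | base =>
    intro s
    simpa using (Real.hasDerivAt_exp s)
  | succ n hn ih =>
    intro s
    have hrec : ∀ u : ℝ, (∑ r ∈ Finset.range (n+1),
        (-1 : ℝ) ^ (n + 1 - r - 1) * ((Nat.factorial (n + 1 - 1) : ℝ) / (Nat.factorial r : ℝ)) * u ^ r)
        = u ^ n - (n : ℝ) * ∑ r ∈ Finset.range n,
        (-1 : ℝ) ^ (n - r - 1) * ((Nat.factorial (n - 1) : ℝ) / (Nat.factorial r : ℝ)) * u ^ r := by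
      intro u
      rw [Finset.sum_range_succ, Finset.mul_sum]
      have h1 : (-1 : ℝ) ^ (n + 1 - n - 1) * ((Nat.factorial (n + 1 - 1) : ℝ) / (Nat.factorial n : ℝ)) * u ^ n = u ^ n := by
        have : (Nat.factorial n : ℝ) ≠ 0 := Nat.cast_ne_zero.mpr (Nat.factorial_ne_zero n)
        simp [div_self this]
      rw [h1]
      have h2 : ∀ r ∈ Finset.range n,
          (-1 : ℝ) ^ (n + 1 - r - 1) * ((Nat.factorial (n + 1 - 1) : ℝ) / (Nat.factorial r : ℝ)) * u ^ r
          = -((n : ℝ) * ((-1 : ℝ) ^ (n - r - 1) * ((Nat.factorial (n - 1) : ℝ) / (Nat.factorial r : ℝ)) * u ^ r)) := by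
        intro r hr
        rw [Finset.mem_range] at hr
        have e1 : n + 1 - r - 1 = (n - r - 1) + 1 := by omega
        have e2 : (Nat.factorial (n + 1 - 1) : ℝ) = (n : ℝ) * (Nat.factorial (n - 1) : ℝ) := by
          have : n * Nat.factorial (n - 1) = Nat.factorial n := Nat.mul_factorial_pred (by omega)
          rw [Nat.add_sub_cancel, ← this]
          push_cast; ring
        rw [e1, e2, pow_succ]
        ring
      rw [Finset.sum_congr rfl h2, Finset.sum_neg_distrib]
      ring
    have heq : (fun u : ℝ => (∑ r ∈ Finset.range (n+1),
        (-1 : ℝ) ^ (n + 1 - r - 1) * ((Nat.factorial (n + 1 - 1) : ℝ) / (Nat.factorial r : ℝ)) * u ^ r) * Real.exp u)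
        = fun u : ℝ => u ^ n * Real.exp u - (n : ℝ) * ((∑ r ∈ Finset.range n,
        (-1 : ℝ) ^ (n - r - 1) * ((Nat.factorial (n - 1) : ℝ) / (Nat.factorial r : ℝ)) * u ^ r) * Real.exp u) := by
      funext u; rw [hrec]; ring
    rw [heq]
    have hd1 : HasDerivAt (fun u : ℝ => u ^ n * Real.exp u)
        ((n : ℝ) * s ^ (n-1) * Real.exp s + s ^ n * Real.exp s) s :=
      (hasDerivAt_pow n s).mul (Real.hasDerivAt_exp s)
    have hd2 := (ih s).const_mul (n : ℝ)
    have := hd1.sub hd2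
    convert this using 1
    · rfl
    · rfl
    · rfl
    simp only [Nat.add_sub_cancel]
    ring

section
variable {n : ℕ} (hn : 1 ≤ n) {g : ℝ → ℝ}
  (hgd : ∀ s : ℝ, HasDerivAt g (s ^ (n-1) * Real.exp s) s) (hg0 : g 0 = 0)

include hgd in
lemma aux_mono : StrictMonoOn g (Set.Ici 0) := by
  have hdiff : Differentiable ℝ g := fun s => (hgd s).differentiableAt
  apply strictMonoOn_of_deriv_pos (convex_Ici 0) hdiff.continuous.continuousOn
  intro s hs
  rw [interior_Ici] at hs
  rw [(hgd s).deriv]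
  have hs' : 0 < s := hs
  positivity

include hn hgd hg0 in
lemma aux_low : ∀ s : ℝ, 0 ≤ s → s^n/(n:ℝ) + s^(n+1)/((n:ℝ)+1) ≤ g s := by
  have hnpos : (0:ℝ) < n := by exact_mod_cast hn
  set h : ℝ → ℝ := fun s => g s - s^n/(n:ℝ) - s^(n+1)/((n:ℝ)+1) with hhdef
  have hd : ∀ u : ℝ, HasDerivAt h (u^(n-1) * Real.exp u - u^(n-1) - u^n) u := by
    intro u
    have h1 : HasDerivAt (fun u : ℝ => u^n/(n:ℝ)) (u^(n-1)) u := by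
      have := (hasDerivAt_pow n u).div_const (n:ℝ)
      convert this using 1
      · rfl
      · rfl
      field_simp
    have h2 : HasDerivAt (fun u : ℝ => u^(n+1)/((n:ℝ)+1)) (u^n) u := by
      have := (hasDerivAt_pow (n+1) u).div_const ((n:ℝ)+1)
      convert this using 1
      have : ((n:ℝ)+1) ≠ 0 := by positivity
      · rfl
      · rfl
      field_simp
      rw [Nat.add_sub_cancel]; push_cast; ring
    exact ((hgd u).sub h1).sub h2
  have hdiff : Differentiable ℝ h := fun u => (hd u).differentiableAt
  have hmo : MonotoneOn h (Set.Ici 0) := by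
    apply monotoneOn_of_deriv_nonneg (convex_Ici 0) hdiff.continuous.continuousOn
      hdiff.differentiableOn
    intro u hu
    rw [interior_Ici] at hu
    have hu' : (0:ℝ) < u := hu
    rw [(hd u).deriv]
    have hexp : u + 1 ≤ Real.exp u := Real.add_one_le_exp u
    have h1 : u^(n-1) * u = u^n := by
      rw [← pow_succ]
      congr 1
      omega
    nlinarith [pow_nonneg hu'.le (n-1), mul_le_mul_of_nonneg_left hexp (pow_nonneg hu'.le (n-1))]
  intro s hs
  have := hmo (Set.self_mem_Ici) hs hs
  have h0 : h 0 = 0 := by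
    simp [hhdef, hg0, zero_pow (by omega : n ≠ 0)]
  rw [h0] at this
  simp only [hhdef] at this
  linarith

include hn hgd hg0 in
lemma aux_up : ∀ s : ℝ, 0 ≤ s → s ≤ 1 → g s ≤ s^n/(n:ℝ) + s^(n+1)/((n:ℝ)+1) + s^(n+2) := by
  have hnpos : (0:ℝ) < n := by exact_mod_cast hn
  set k : ℝ → ℝ := fun s => s^n/(n:ℝ) + s^(n+1)/((n:ℝ)+1) + s^(n+2) - g s with hkdef
  have hd : ∀ u : ℝ, HasDerivAt k
      (u^(n-1) + u^n + ((n:ℝ)+2)*u^(n+1) - u^(n-1) * Real.exp u) u := by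
    intro u
    have h1 : HasDerivAt (fun u : ℝ => u^n/(n:ℝ)) (u^(n-1)) u := by
      have := (hasDerivAt_pow n u).div_const (n:ℝ)
      convert this using 1
      · rfl
      · rfl
      field_simp
    have h2 : HasDerivAt (fun u : ℝ => u^(n+1)/((n:ℝ)+1)) (u^n) u := by
      have := (hasDerivAt_pow (n+1) u).div_const ((n:ℝ)+1)
      convert this using 1
      have : ((n:ℝ)+1) ≠ 0 := by positivity
      · rfl
      · rfl
      field_simp
      rw [Nat.add_sub_cancel]; push_cast; ring
    have h3 : HasDerivAt (fun u : ℝ => u^(n+2)) (((n:ℝ)+2)*u^(n+1)) u := by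
      have := hasDerivAt_pow (n+2) u
      convert this using 1
      · rfl
      push_cast
      ring_nf
    exact ((h1.add h2).add h3).sub (hgd u)
  have hdiff : Differentiable ℝ k := fun u => (hd u).differentiableAt
  have hmo : MonotoneOn k (Set.Icc 0 1) := by
    apply monotoneOn_of_deriv_nonneg (convex_Icc 0 1) hdiff.continuous.continuousOn
      hdiff.differentiableOn
    intro u hu
    rw [interior_Icc] at hu
    obtain ⟨hu0, hu1⟩ := hu
    rw [(hd u).deriv]
    have hexp : Real.exp u ≤ 1 + u + u^2 := by
      have hb := Real.exp_bound (x := u) (by rw [abs_of_pos hu0]; linarith) (n := 2) (by norm_num)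
      have hs : ∑ m ∈ range 2, u ^ m / (m.factorial : ℝ) = 1 + u := by
        simp [Finset.sum_range_succ]
      rw [hs, abs_of_pos hu0] at hb
      norm_num at hb
      have := abs_le.mp hb
      nlinarith [this.2]
    have hpn : (0:ℝ) ≤ u^(n-1) := pow_nonneg hu0.le (n-1)
    have h1 : u^(n-1) * u = u^n := by rw [← pow_succ]; congr 1; omega
    have h2 : u^n * u = u^(n+1) := by rw [← pow_succ]
    have key : u^(n-1) * Real.exp u ≤ u^(n-1) + u^n + 3*u^(n+1) := by
      calc u^(n-1) * Real.exp u ≤ u^(n-1) * (1 + u + u^2) :=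
            mul_le_mul_of_nonneg_left hexp hpn
        _ = u^(n-1) + u^n + u^(n+1) := by
            have h3 : u^(n-1)*u^2 = u^(n+1) := by rw [← h2, ← h1]; ring
            rw [mul_add, mul_add, mul_one, h1, h3]
        _ ≤ u^(n-1) + u^n + 3*u^(n+1) := by nlinarith [pow_nonneg hu0.le (n+1)]
    have hn2 : (3:ℝ) ≤ (n:ℝ)+2 := by
      have : (1:ℝ) ≤ (n:ℝ) := by exact_mod_cast hn
      linarith
    nlinarith [pow_nonneg hu0.le (n+1)]
  intro s hs0 hs1
  have := hmo (Set.mem_Icc.mpr ⟨le_refl 0, zero_le_one⟩) (Set.mem_Icc.mpr ⟨hs0, hs1⟩) hs0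
  have h0 : k 0 = 0 := by
    simp [hkdef, hg0, zero_pow (by omega : n ≠ 0)]
  rw [h0] at this
  simp only [hkdef] at this
  linarith

end

lemma aux_pow_le (m : ℕ) {e : ℝ} (h1 : -1 ≤ e) (h2 : e ≤ 0) :
    (1 + e) ^ m ≤ 1 + m * e + m ^ 2 * e ^ 2 := by
  have hb : 1 - (m : ℝ) * e ≤ (1 - e) ^ m := by
    simpa [sub_eq_add_neg, mul_comm] using one_add_mul_le_pow (a := -e) (by linarith) m
  have hprod : (1 + e) ^ m * (1 - e) ^ m ≤ 1 := by
    rw [← mul_pow]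
    apply pow_le_one₀ (by nlinarith) (by nlinarith)
  have hpos : (0:ℝ) < 1 - (m:ℝ) * e := by
    have : (0:ℝ) ≤ (m:ℝ) * (-e) := mul_nonneg (Nat.cast_nonneg m) (by linarith)
    nlinarith
  have hnn : (0:ℝ) ≤ (1 + e) ^ m := pow_nonneg (by linarith) m
  have h3 : (1 + e) ^ m * (1 - (m:ℝ) * e) ≤ 1 := by
    calc (1 + e) ^ m * (1 - (m:ℝ) * e) ≤ (1 + e) ^ m * (1 - e) ^ m :=
          mul_le_mul_of_nonneg_left hb hnn
      _ ≤ 1 := hprod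
  have hm3 : (0:ℝ) ≤ (m:ℝ)^3 := by positivity
  have h4 : (1:ℝ) ≤ (1 + m * e + m ^ 2 * e ^ 2) * (1 - (m:ℝ) * e) := by
    nlinarith [pow_nonneg (neg_nonneg.mpr h2) 3]
  nlinarith

lemma aux_key (n : ℕ) (hn : 1 ≤ n) (g : ℝ → ℝ)
    (hmono : StrictMonoOn g (Set.Ici 0))
    (hlow : ∀ s : ℝ, 0 ≤ s → s^n/(n:ℝ) + s^(n+1)/((n:ℝ)+1) ≤ g s)
    (hup : ∀ s : ℝ, 0 ≤ s → s ≤ 1 → g s ≤ s^n/(n:ℝ) + s^(n+1)/((n:ℝ)+1) + s^(n+2))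
    {x y : ℝ} (hx : 0 < x) (hxd : x ≤ 1/(8*((n:ℝ)+1))) (hy : 0 < y)
    (hgy : g y = x^n/(n:ℝ)) :
    |y - (x - 1/((n:ℝ)+1)*x^2)| ≤ 2*x^3 := by
  have hnn1 : (1:ℝ) ≤ (n:ℝ) := by exact_mod_cast hn
  have hnpos : (0:ℝ) < (n:ℝ) := by linarith
  have hn0 : ((n:ℝ)) ≠ 0 := ne_of_gt hnpos
  have hn10 : ((n:ℝ)+1) ≠ 0 := by positivity
  rw [show (1:ℝ)/((n:ℝ)+1)*x^2 = (1/((n:ℝ)+1))*x^2 from rfl]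
  obtain ⟨a, hadef⟩ : ∃ a : ℝ, a = 1/((n:ℝ)+1) := ⟨_, rfl⟩
  rw [← hadef]
  have hapos : 0 < a := by rw [hadef]; positivity
  have ha : a*((n:ℝ)+1) = 1 := by rw [hadef]; field_simp
  have ha2 : a ≤ 1/2 := by
    rw [hadef, div_le_div_iff₀ (by linarith) (by norm_num)]; linarith
  have hx8 : x ≤ a/8 := by
    have h8 : a/8 = 1/(8*((n:ℝ)+1)) := by rw [hadef, div_div, mul_comm]
    linarith only [h8 ▸ hxd]
  have hax : a*x ≤ (1/2)*x := mul_le_mul_of_nonneg_right ha2 hx.le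
  have haxnn : 0 ≤ a*x := mul_nonneg hapos.le hx.le
  have hx1 : x ≤ 1/16 := by
    have h16 : (16:ℝ) ≤ 8*((n:ℝ)+1) := by linarith
    calc x ≤ 1/(8*((n:ℝ)+1)) := hxd
      _ ≤ 1/16 := by
        apply one_div_le_one_div_of_le (by norm_num) h16
  have hxx : x*x ≤ x*(1/16) := mul_le_mul_of_nonneg_left hx1 hx.le
  have hX : (0:ℝ) < x^n := pow_pos hx n
  -- ===== Upper bound: y ≤ ψp =====
  obtain ⟨e1, he1def⟩ : ∃ e : ℝ, e = -(a*x) + x^2 := ⟨_, rfl⟩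
  have he1l : (-1:ℝ) ≤ e1 := by
    rw [he1def]; linarith only [hax, hx1, sq_nonneg x, hx.le]
  obtain ⟨ψp, hψpdef⟩ : ∃ p : ℝ, p = x - a*x^2 + x^3 := ⟨_, rfl⟩
  have hψp_eq : ψp = x*(1+e1) := by rw [hψpdef, he1def]; ring
  have h1pe1 : (0:ℝ) < 1 + e1 := by
    rw [he1def]; nlinarith only [hax, hx1, sq_nonneg x, hx]
  have hψp_pos : 0 < ψp := by rw [hψp_eq]; positivity
  have hBn : 1 + (n:ℝ)*e1 ≤ (1+e1)^n := one_add_mul_le_pow (by linarith) n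
  have hBn1 : 1 + ((n:ℝ)+1)*e1 ≤ (1+e1)^(n+1) := by
    have h := one_add_mul_le_pow (a := e1) (by linarith) (n+1)
    push_cast at h
    linarith only [h]
  have hpow1 : ψp^n = x^n*(1+e1)^n := by rw [hψp_eq, mul_pow]
  have hpow2 : ψp^(n+1) = x^n*x*(1+e1)^(n+1) := by rw [hψp_eq, mul_pow, pow_succ]
  have hc1 : x^n*(1+(n:ℝ)*e1)/(n:ℝ) ≤ ψp^n/(n:ℝ) := by
    rw [hpow1]
    gcongr
  have hc2 : x^n*x*(1+((n:ℝ)+1)*e1)/((n:ℝ)+1) ≤ ψp^(n+1)/((n:ℝ)+1) := by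
    rw [hpow2]
    gcongr
  have hiden : x^n*(1+(n:ℝ)*e1)/(n:ℝ) + x^n*x*(1+((n:ℝ)+1)*e1)/((n:ℝ)+1)
      = x^n/(n:ℝ) + x^n*x^2*(1-a) + x^n*x^3 := by
    rw [he1def, hadef]
    field_simp
    ring
  have hP1 : x^n/(n:ℝ) ≤ ψp^n/(n:ℝ) + ψp^(n+1)/((n:ℝ)+1) := by
    have hnn2 : (0:ℝ) ≤ x^n*x^2 := by positivity
    have hnn3 : (0:ℝ) ≤ x^n*x^3 := by positivity
    have hnn4 : (0:ℝ) ≤ x^n*x^2*(1-a) := mul_nonneg hnn2 (by linarith only [ha2])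
    calc x^n/(n:ℝ) ≤ x^n/(n:ℝ) + x^n*x^2*(1-a) + x^n*x^3 := by
          linarith only [hnn3, hnn4]
      _ = x^n*(1+(n:ℝ)*e1)/(n:ℝ) + x^n*x*(1+((n:ℝ)+1)*e1)/((n:ℝ)+1) := hiden.symm
      _ ≤ ψp^n/(n:ℝ) + ψp^(n+1)/((n:ℝ)+1) := add_le_add hc1 hc2
  have hyp : y ≤ ψp := by
    by_contra h
    push_neg at h
    have hlt := hmono (Set.mem_Ici.mpr hψp_pos.le) (Set.mem_Ici.mpr hy.le) h
    have hglow := hlow ψp hψp_pos.le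
    rw [hgy] at hlt
    linarith only [hlt, hglow, hP1]
  -- ===== Lower bound: ψm ≤ y =====
  obtain ⟨e2, he2def⟩ : ∃ e : ℝ, e = -(a*x) - 2*x^2 := ⟨_, rfl⟩
  have he2u : e2 ≤ 0 := by
    rw [he2def]; linarith only [haxnn, sq_nonneg x]
  have he2l : (-1:ℝ) ≤ e2 := by
    rw [he2def]; linarith only [hax, hxx, hx1]
  obtain ⟨ψm, hψmdef⟩ : ∃ p : ℝ, p = x - a*x^2 - 2*x^3 := ⟨_, rfl⟩
  have hψm_eq : ψm = x*(1+e2) := by rw [hψmdef, he2def]; ring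
  have h1pe2 : (0:ℝ) < 1 + e2 := by
    rw [he2def]; nlinarith only [hax, hxx, hx1, hx]
  have hψm_pos : 0 < ψm := by rw [hψm_eq]; positivity
  have hψm_lex : ψm ≤ x := by
    rw [hψmdef]
    have h1 : (0:ℝ) ≤ a*x^2 := mul_nonneg hapos.le (sq_nonneg x)
    have h2 : (0:ℝ) ≤ x^3 := by positivity
    linarith only [h1, h2]
  have hψm_le1 : ψm ≤ 1 := by linarith only [hψm_lex, hx1]
  have hCn : (1+e2)^n ≤ 1 + (n:ℝ)*e2 + (n:ℝ)^2*e2^2 := aux_pow_le n he2l he2u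
  have hCn1 : (1+e2)^(n+1) ≤ 1 + ((n:ℝ)+1)*e2 + ((n:ℝ)+1)^2*e2^2 := by
    have h := aux_pow_le (n+1) he2l he2u
    push_cast at h
    linarith only [h]
  have habs : -e2 ≤ (5/4)*(a*x) := by
    have h2x := mul_le_mul_of_nonneg_left hx8 (by linarith only [hx] : (0:ℝ) ≤ 2*x)
    rw [he2def]; linarith only [h2x]
  have hsq : e2^2 ≤ (25/16)*(a^2*x^2) := by
    have h0 : (0:ℝ) ≤ -e2 := by linarith only [he2u]
    linarith only [mul_self_le_mul_self h0 habs]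
  have ha2' : a^2*((n:ℝ)+1)^2 = 1 := by rw [← mul_pow, ha]; norm_num
  have hna : (n:ℝ)*a^2 ≤ 1/4 := by
    linarith only [mul_nonneg (sq_nonneg a) (sq_nonneg ((n:ℝ)-1)), ha2']
  have ha3 : a^2*((n:ℝ)+1) = a := by linear_combination a * ha
  have hxa : x*a ≤ 1/32 := by linarith only [hax, hx1]
  have hT1 : (n:ℝ)*e2^2 ≤ (25/64)*x^2 := by
    have h := mul_le_mul_of_nonneg_left hsq (le_of_lt hnpos)
    have h2 := mul_le_mul_of_nonneg_right hna (sq_nonneg x)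
    linarith only [h, h2]
  have hT2 : ((n:ℝ)+1)*x*e2^2 ≤ (25/256)*x^2 := by
    have h := mul_le_mul_of_nonneg_left hsq (show (0:ℝ) ≤ ((n:ℝ)+1)*x by positivity)
    have h3 : a^2*((n:ℝ)+1)*x^3 = a*x^3 := by linear_combination x^3 * ha3
    have h4 := mul_le_mul_of_nonneg_right hxa (sq_nonneg x)
    linarith only [h, h3, h4, sq_nonneg x]
  have hT3 : x*e2 ≤ 0 := mul_nonpos_of_nonneg_of_nonpos hx.le he2u
  have hbr : e2 + (n:ℝ)*e2^2 + a*x + x*e2 + ((n:ℝ)+1)*x*e2^2 + x^2 ≤ 0 := by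
    have hea : e2 + a*x = -(2*x^2) := by rw [he2def]; ring
    linarith only [hea, hT1, hT2, hT3, sq_nonneg x]
  have hpm1 : ψm^n = x^n*(1+e2)^n := by rw [hψm_eq, mul_pow]
  have hpm2 : ψm^(n+1) = x^n*x*(1+e2)^(n+1) := by rw [hψm_eq, mul_pow, pow_succ]
  have hpm3 : ψm^(n+2) = x^n*x^2*(1+e2)^(n+2) := by
    rw [hψm_eq, mul_pow, pow_add]
  have hc1' : ψm^n/(n:ℝ) ≤ x^n*(1 + (n:ℝ)*e2 + (n:ℝ)^2*e2^2)/(n:ℝ) := by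
    rw [hpm1]
    gcongr
  have hc2' : ψm^(n+1)/((n:ℝ)+1) ≤ x^n*x*(1 + ((n:ℝ)+1)*e2 + ((n:ℝ)+1)^2*e2^2)/((n:ℝ)+1) := by
    rw [hpm2]
    gcongr
  have hc3' : ψm^(n+2) ≤ x^n*x^2 := by
    rw [hpm3]
    exact mul_le_of_le_one_right (by positivity) (pow_le_one₀ h1pe2.le (by linarith only [he2u]))
  have hiden2 : x^n*(1 + (n:ℝ)*e2 + (n:ℝ)^2*e2^2)/(n:ℝ) + x^n*x*(1 + ((n:ℝ)+1)*e2 + ((n:ℝ)+1)^2*e2^2)/((n:ℝ)+1) + x^n*x^2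
      = x^n/(n:ℝ) + x^n*(e2 + (n:ℝ)*e2^2 + a*x + x*e2 + ((n:ℝ)+1)*x*e2^2 + x^2) := by
    rw [hadef]
    field_simp
    ring
  have hP2 : ψm^n/(n:ℝ) + ψm^(n+1)/((n:ℝ)+1) + ψm^(n+2) ≤ x^n/(n:ℝ) := by
    have hXbr : x^n*(e2 + (n:ℝ)*e2^2 + a*x + x*e2 + ((n:ℝ)+1)*x*e2^2 + x^2) ≤ 0 :=
      mul_nonpos_of_nonneg_of_nonpos hX.le hbr
    calc ψm^n/(n:ℝ) + ψm^(n+1)/((n:ℝ)+1) + ψm^(n+2)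
        ≤ x^n*(1 + (n:ℝ)*e2 + (n:ℝ)^2*e2^2)/(n:ℝ) + x^n*x*(1 + ((n:ℝ)+1)*e2 + ((n:ℝ)+1)^2*e2^2)/((n:ℝ)+1) + x^n*x^2 := by
          linarith only [hc1', hc2', hc3']
      _ = x^n/(n:ℝ) + x^n*(e2 + (n:ℝ)*e2^2 + a*x + x*e2 + ((n:ℝ)+1)*x*e2^2 + x^2) := hiden2
      _ ≤ x^n/(n:ℝ) := by linarith only [hXbr]
  have hym : ψm ≤ y := by
    by_contra h
    push_neg at h
    have hlt := hmono (Set.mem_Ici.mpr hy.le) (Set.mem_Ici.mpr hψm_pos.le) h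
    have hgup := hup ψm hψm_pos.le hψm_le1
    rw [hgy] at hlt
    linarith only [hlt, hgup, hP2]
  rw [abs_le]
  have hx3 : (0:ℝ) ≤ x^3 := by positivity
  constructor
  · linarith only [hym, hψmdef, hx3]
  · linarith only [hyp, hψpdef, hx3]

/-- For `a = 0`, as `t → −∞`, `φ(t) = e^t − (1/(n+1)) e^{2t} + O(e^{3t})`. -/
theorem stmt_6 (n : ℕ) (hn : 1 ≤ n)
    (F : ℝ → ℝ)
    (hF : ∀ x : ℝ, F x = ∑ r ∈ Finset.range n,
      (-1 : ℝ) ^ (n - r - 1) * ((Nat.factorial (n - 1) : ℝ) / (Nat.factorial r : ℝ)) * x ^ r)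
    (φ : ℝ → ℝ) (hφpos : ∀ t, 0 < φ t)
    (hφeq : ∀ t, F (φ t) * Real.exp (φ t) = Real.exp (n * t) / n + F 0) :
    (fun t => φ t - (Real.exp t - (1 / (n + 1)) * Real.exp (2 * t)))
      =O[atBot] (fun t => Real.exp (3 * t)) := by
  have hnn1 : (1:ℝ) ≤ (n:ℝ) := by exact_mod_cast hn
  obtain ⟨g, hgdef⟩ : ∃ g : ℝ → ℝ, g = fun s => F s * Real.exp s - F 0 := ⟨_, rfl⟩
  have hgd : ∀ s : ℝ, HasDerivAt g (s ^ (n-1) * Real.exp s) s := by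
    intro s
    have h1 : (fun s : ℝ => F s * Real.exp s) = fun s : ℝ => (∑ r ∈ Finset.range n,
        (-1 : ℝ) ^ (n - r - 1) * ((Nat.factorial (n - 1) : ℝ) / (Nat.factorial r : ℝ)) * s ^ r) * Real.exp s := by
      funext u; rw [hF]
    rw [hgdef]
    have h2 := aux_deriv n hn s
    rw [← h1] at h2
    exact h2.sub_const _
  have hg0 : g 0 = 0 := by rw [hgdef]; simp
  have hmono := aux_mono hgd
  have hlow := aux_low hn hgd hg0
  have hup := aux_up hn hgd hg0
  have hgφ : ∀ t : ℝ, g (φ t) = (Real.exp t)^n / (n:ℝ) := by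
    intro t
    rw [hgdef]
    simp only
    rw [hφeq t, Real.exp_nat_mul]
    ring
  rw [Asymptotics.isBigO_iff]
  refine ⟨2, ?_⟩
  have hδpos : 0 < 1/(8*((n:ℝ)+1)) := by positivity
  filter_upwards [Filter.eventually_le_atBot (Real.log (1/(8*((n:ℝ)+1))))] with t ht
  have hx : 0 < Real.exp t := Real.exp_pos t
  have hxd : Real.exp t ≤ 1/(8*((n:ℝ)+1)) := by
    calc Real.exp t ≤ Real.exp (Real.log (1/(8*((n:ℝ)+1)))) := Real.exp_le_exp.mpr ht
      _ = _ := Real.exp_log hδpos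
  have hk := aux_key n hn g hmono hlow hup hx hxd (hφpos t) (hgφ t)
  have h2 : Real.exp (2*t) = (Real.exp t)^2 := by rw [two_mul, Real.exp_add, sq]
  have h3 : Real.exp (3*t) = (Real.exp t)^3 := by
    rw [show (3:ℝ)*t = t+t+t by ring, Real.exp_add, Real.exp_add]; ring
  rw [Real.norm_eq_abs, Real.norm_eq_abs, h2, h3,
    abs_of_pos (by positivity : (0:ℝ) < (Real.exp t)^3)]
  convert hk using 3
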